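/- Let F : M_n(ℂ) → M_m(ℂ) be a UCP map, let σ ∈ M_n(ℂ) and ρ ∈ M_m(ℂ) be density matrices with tr(ρF(B)) = tr(σB) for all B, and let Q and R be the support projections of σ and ρ respectively. Suppose F̄ : M_m(ℂ) → M_n(ℂ) is a disintegration of (F, ω), i.e., F̄ is UCP, tr(σF̄(A)) = tr(ρA) for all A, and (F̄(F(B)) − B)Q = 0 for all B ∈ M_n(ℂ). Then the map G(A) := Q·F̄(RAR)·Q is a disintegration of the corner map B ↦ RF(QBQ)R with respect to the restricted faithful states: (1) tr(σ·G(A)) = tr(ρ·RAR) for all A ∈ M_m(ℂ); (2) G(R) = Q; (3) Q·F̄(R·F(QBQ)·R)·Q = QBQ for all B ∈ M_n(ℂ). -/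

import Mathlib

open Matrix ComplexOrder

/-- The `k`-th amplification `id_{M_k(ℂ)} ⊗ Φ` of a map `Φ` between matrix algebras. -/
def amplify {n m : Type*} (Φ : Matrix n n ℂ → Matrix m m ℂ) (k : ℕ)
    (M : Matrix (Fin k × n) (Fin k × n) ℂ) : Matrix (Fin k × m) (Fin k × m) ℂ :=
  Matrix.of fun p q => Φ (Matrix.of fun a b => M (p.1, a) (q.1, b)) p.2 q.2

/-- Complete positivity: all amplifications preserve positive semidefiniteness. -/
def IsCP {n m : Type*} [Fintype n] [Fintype m] (Φ : Matrix n n ℂ → Matrix m m ℂ) : Prop :=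
  ∀ (k : ℕ) (M : Matrix (Fin k × n) (Fin k × n) ℂ), M.PosSemidef → (amplify Φ k M).PosSemidef

/-- `P` is the support projection of `σ`: the orthogonal projection (Hermitian idempotent)
whose range equals the range of `σ`. -/
def IsSupportProj {n : Type*} [Fintype n] [DecidableEq n] (P σ : Matrix n n ℂ) : Prop :=
  P.IsHermitian ∧ P * P = P ∧ LinearMap.range P.mulVecLin = LinearMap.range σ.mulVecLin

section Helpers

variable {d : Type*} [Fintype d] [DecidableEq d]

lemma my_ext_mulVec {A B : Matrix d d ℂ} (h : ∀ v, A *ᵥ v = B *ᵥ v) : A = B := by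
  ext i j
  have := congrFun (h (Pi.single j 1)) i
  simpa using this

lemma supp_left {Q σ : Matrix d d ℂ} (hQ : IsSupportProj Q σ) : Q * σ = σ := by
  apply my_ext_mulVec
  intro v
  obtain ⟨w, hw⟩ : σ *ᵥ v ∈ LinearMap.range Q.mulVecLin := by
    rw [hQ.2.2]; exact ⟨v, rfl⟩
  rw [Matrix.mulVecLin_apply] at hw
  have h2 : Q *ᵥ (Q *ᵥ w) = Q *ᵥ w := by
    rw [Matrix.mulVec_mulVec, hQ.2.1]
  rw [← Matrix.mulVec_mulVec, ← hw, h2, hw]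

lemma supp_right {Q σ : Matrix d d ℂ} (hσ : σ.IsHermitian) (hQ : IsSupportProj Q σ) :
    σ * Q = σ := by
  have := supp_left hQ
  calc σ * Q = (Q * σ)ᴴ := by rw [conjTranspose_mul, hσ.eq, hQ.1.eq]
  _ = σ := by rw [this, hσ.eq]

lemma trace_ct_mul_self_eq_zero {e f : Type*} [Fintype e] [Fintype f] {A : Matrix e f ℂ}
    (h : (Aᴴ * A).trace = 0) : A = 0 := by
  have h1 : ∀ j ∈ Finset.univ, (Aᴴ * A) j j = 0 := by
    rw [← Finset.sum_eq_zero_iff_of_nonneg]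
    · exact h
    · intro j _
      simpa [Matrix.mul_apply, Matrix.conjTranspose_apply] using
        Finset.sum_nonneg fun i _ => star_mul_self_nonneg (A i j)
  ext i j
  have h2 := h1 j (Finset.mem_univ j)
  rw [Matrix.mul_apply] at h2
  simp only [Matrix.conjTranspose_apply] at h2
  have h3 : ∀ i ∈ Finset.univ, star (A i j) * A i j = 0 :=
    (Finset.sum_eq_zero_iff_of_nonneg (fun i _ => star_mul_self_nonneg (A i j))).mp h2
  have := h3 i (Finset.mem_univ i)
  have h4 : A i j = 0 := by
    rcases mul_eq_zero.mp this with h | h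
    · exact star_eq_zero.mp h
    · exact h
  simpa using h4

open scoped MatrixOrder in
/-- If `σ, X` are PSD with `tr(σX) = 0` and `Q` is the support projection of `σ`,
then `X * Q = 0`. -/
lemma key_zero {σ X Q : Matrix d d ℂ} (hσ : σ.PosSemidef) (hX : X.PosSemidef)
    (hQ : IsSupportProj Q σ) (h : (σ * X).trace = 0) : X * Q = 0 := by
  set s := CFC.sqrt σ with hs
  set x := CFC.sqrt X with hx
  have hsh : sᴴ = s := (CFC.sqrt_nonneg σ).posSemidef.isHermitian
  have hxh : xᴴ = x := (CFC.sqrt_nonneg X).posSemidef.isHermitian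
  have hss : s * s = σ := CFC.sqrt_mul_sqrt_self σ hσ.nonneg
  have hxx : x * x = X := CFC.sqrt_mul_sqrt_self X hX.nonneg
  have h1 : ((x * s)ᴴ * (x * s)).trace = 0 := by
    have e1 : (x * s)ᴴ * (x * s) = s * (X * s) := by
      rw [conjTranspose_mul, hsh, hxh, Matrix.mul_assoc, ← Matrix.mul_assoc x x s, hxx]
    rw [e1, ← Matrix.mul_assoc, Matrix.trace_mul_cycle, hss]
    exact h
  have h2 : x * s = 0 := trace_ct_mul_self_eq_zero h1
  have h3 : X * σ = 0 := by
    rw [← hxx, ← hss, Matrix.mul_assoc, ← Matrix.mul_assoc x s s, h2, Matrix.zero_mul,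
      Matrix.mul_zero]
  -- X kills range σ = range Q
  have h4 : ∀ v, X *ᵥ (Q *ᵥ v) = 0 := by
    intro v
    obtain ⟨w, hw⟩ : Q *ᵥ v ∈ LinearMap.range σ.mulVecLin := by
      rw [← hQ.2.2]; exact ⟨v, rfl⟩
    rw [Matrix.mulVecLin_apply] at hw
    rw [← hw, Matrix.mulVec_mulVec, h3, Matrix.zero_mulVec]
  apply my_ext_mulVec
  intro v
  rw [← Matrix.mulVec_mulVec, h4, Matrix.zero_mulVec]

/-- A completely positive map is positive. -/
lemma isCP_pos {a b : Type*} [Fintype a] [Fintype b] {Φ : Matrix a a ℂ → Matrix b b ℂ}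
    (hΦ : IsCP Φ) {A : Matrix a a ℂ} (hA : A.PosSemidef) : (Φ A).PosSemidef := by
  have h1 : (A.submatrix (Prod.snd : Fin 1 × a → a) Prod.snd).PosSemidef := hA.submatrix _
  have h2 := hΦ 1 _ h1
  have h3 : amplify Φ 1 (A.submatrix Prod.snd Prod.snd)
      = (Φ A).submatrix (Prod.snd : Fin 1 × b → b) Prod.snd := rfl
  rw [h3] at h2
  have h4 := h2.submatrix (fun p : b => ((0 : Fin 1), p))
  exact h4

open scoped MatrixOrder in
/-- Diagonal entry zero in a PSD matrix kills the row. -/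
lemma psd_entry_zero {N : Matrix d d ℂ} (hN : N.PosSemidef) {r : d} (h : N r r = 0) (t : d) :
    N r t = 0 := by
  have hxh := (CFC.sqrt_nonneg N).posSemidef.isHermitian
  have hxx : CFC.sqrt N * CFC.sqrt N = N := CFC.sqrt_mul_sqrt_self N hN.nonneg
  have h0 : dotProduct (star fun c => CFC.sqrt N c r) (fun c => CFC.sqrt N c r) = 0 := by
    have e : dotProduct (star fun c => CFC.sqrt N c r) (fun c => CFC.sqrt N c r)
        = (CFC.sqrt N * CFC.sqrt N) r r := by
      rw [Matrix.mul_apply, dotProduct]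
      exact Finset.sum_congr rfl fun c _ => by rw [Pi.star_apply, hxh.apply]
    rw [e, hxx, h]
  have hcol := dotProduct_star_self_eq_zero.mp h0
  have e2 : N r t = ∑ c, CFC.sqrt N r c * CFC.sqrt N c t := by
    rw [← Matrix.mul_apply, hxx]
  rw [e2]
  apply Finset.sum_eq_zero
  intro c _
  have hc : CFC.sqrt N c r = 0 := by simpa using congrFun hcol c
  rw [← hxh.apply, hc, star_zero, zero_mul]

/-- The key Cauchy–Schwarz/multiplicative-domain style lemma from 2-positivity. -/
lemma corner_zero {a b : Type*} [Fintype a] [Fintype b] [DecidableEq b]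
    (Φ : Matrix a a ℂ → Matrix b b ℂ) (hΦ : IsCP Φ)
    {P : Matrix a a ℂ} (hPh : Pᴴ = P) (hPP : P * P = P)
    {Q : Matrix b b ℂ} (hQh : Qᴴ = Q)
    (hz : Q * Φ P * Q = 0) (A : Matrix a a ℂ) :
    Q * Φ (P * A) * Q = 0 ∧ Q * Φ (Aᴴ * P) * Q = 0 := by
  classical
  set Z : Fin 2 → Matrix a a ℂ := ![P, A] with hZ
  set M : Matrix (Fin 2 × a) (Fin 2 × a) ℂ :=
    Matrix.of fun p q => ((Z p.1)ᴴ * Z q.1) p.2 q.2 with hMdef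
  set C : Matrix (Fin 2 × a) (Fin 2 × a) ℂ :=
    Matrix.of fun p q => if p.1 = 0 then Z q.1 p.2 q.2 else 0 with hCdef
  have hM : M = Cᴴ * C := by
    ext ⟨i, s⟩ ⟨j, t⟩
    simp [hMdef, hCdef, Matrix.mul_apply, Matrix.conjTranspose_apply,
      Fintype.sum_prod_type, Fin.sum_univ_two]
  have hMpsd : M.PosSemidef := hM ▸ posSemidef_conjTranspose_mul_self C
  have hN := hΦ 2 M hMpsd
  set W : Matrix (Fin 2 × b) (Fin 2 × b) ℂ :=
    Matrix.of fun u v => if u.1 = v.1 then Q u.2 v.2 else 0 with hWdef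
  have hNc : (Wᴴ * amplify Φ 2 M * W).PosSemidef := hN.conjTranspose_mul_mul_same W
  have hamp : ∀ (i j : Fin 2) (p q : b),
      amplify Φ 2 M (i, p) (j, q) = Φ ((Z i)ᴴ * Z j) p q := fun _ _ _ _ => rfl
  have hentry : ∀ (i j : Fin 2) (p q : b),
      (Wᴴ * amplify Φ 2 M * W) (i, p) (j, q) = (Q * Φ ((Z i)ᴴ * Z j) * Q) p q := by
    intro i j p q
    have hQs : ∀ x y, star (Q x y) = Q y x := fun x y => congrFun (congrFun hQh y) x
    have hQs' : ∀ x y, (starRingEnd ℂ) (Q x y) = Q y x := fun x y => by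
      rw [starRingEnd_apply]; exact hQs x y
    fin_cases i <;> fin_cases j <;>
    · simp only [Matrix.mul_assoc, Matrix.mul_apply, Matrix.conjTranspose_apply, hWdef,
        Matrix.of_apply, Fintype.sum_prod_type, Fin.sum_univ_two, hamp, hQs]
      simp [Finset.mul_sum, Finset.sum_mul, mul_assoc, hQs']
  have hZ0 : Z 0 = P := rfl
  have hZ1 : Z 1 = A := rfl
  have hdiag : ∀ p : b, (Wᴴ * amplify Φ 2 M * W) ((0 : Fin 2), p) ((0 : Fin 2), p) = 0 := by
    intro p
    rw [hentry 0 0 p p]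
    have e : (Z 0)ᴴ * Z 0 = P := by rw [hZ0, hPh, hPP]
    rw [e, hz]
    simp
  constructor
  · ext p q
    have h1 := psd_entry_zero hNc (hdiag p) ((1 : Fin 2), q)
    rw [hentry 0 1 p q] at h1
    have e : (Z 0)ᴴ * Z 1 = P * A := by rw [hZ0, hZ1, hPh]
    rw [e] at h1
    simpa using h1
  · ext q p
    have h1 := psd_entry_zero hNc (hdiag p) ((1 : Fin 2), q)
    have h2 : (Wᴴ * amplify Φ 2 M * W) ((1 : Fin 2), q) ((0 : Fin 2), p) = 0 := by
      rw [← hNc.isHermitian.apply, h1, star_zero]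
    rw [hentry 1 0 q p] at h2
    have e : (Z 1)ᴴ * Z 0 = Aᴴ * P := by rw [hZ0, hZ1]
    rw [e] at h2
    simpa using h2

end Helpers

theorem stmt_14 (n m : ℕ)
    (F : Matrix (Fin n) (Fin n) ℂ →ₗ[ℂ] Matrix (Fin m) (Fin m) ℂ)
    (hFcp : IsCP (⇑F)) (hFunital : F 1 = 1)
    (σ : Matrix (Fin n) (Fin n) ℂ) (hσ : σ.PosSemidef) (hσtr : σ.trace = 1)
    (ρ : Matrix (Fin m) (Fin m) ℂ) (hρ : ρ.PosSemidef) (hρtr : ρ.trace = 1)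
    (hpres : ∀ B : Matrix (Fin n) (Fin n) ℂ, (ρ * F B).trace = (σ * B).trace)
    (Q : Matrix (Fin n) (Fin n) ℂ) (hQ : IsSupportProj Q σ)
    (R : Matrix (Fin m) (Fin m) ℂ) (hR : IsSupportProj R ρ)
    (Fbar : Matrix (Fin m) (Fin m) ℂ →ₗ[ℂ] Matrix (Fin n) (Fin n) ℂ)
    (hFbarcp : IsCP (⇑Fbar)) (hFbaru : Fbar 1 = 1)
    (hFbarpres : ∀ A : Matrix (Fin m) (Fin m) ℂ, (σ * Fbar A).trace = (ρ * A).trace)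
    (hFbardis : ∀ B : Matrix (Fin n) (Fin n) ℂ, (Fbar (F B) - B) * Q = 0) :
    (∀ A : Matrix (Fin m) (Fin m) ℂ,
      (σ * (Q * Fbar (R * A * R) * Q)).trace = (ρ * (R * A * R)).trace) ∧
    Q * Fbar R * Q = Q ∧
    (∀ B : Matrix (Fin n) (Fin n) ℂ,
      Q * Fbar (R * F (Q * B * Q) * R) * Q = Q * B * Q) := by
  have hσQ : σ * Q = σ := supp_right hσ.isHermitian hQ
  have hQσ : Q * σ = σ := supp_left hQ
  have hρR : ρ * R = ρ := supp_right hρ.isHermitian hR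
  have hRR : R * R = R := hR.2.1
  have hRh : Rᴴ = R := hR.1
  have hQQ : Q * Q = Q := hQ.2.1
  have hQh : Qᴴ = Q := hQ.1
  -- Part 1
  have part1 : ∀ A : Matrix (Fin m) (Fin m) ℂ,
      (σ * (Q * Fbar (R * A * R) * Q)).trace = (ρ * (R * A * R)).trace := by
    intro A
    have e1 : σ * (Q * Fbar (R * A * R) * Q) = σ * Q * Fbar (R * A * R) * Q := by
      simp only [Matrix.mul_assoc]
    rw [e1, hσQ, Matrix.trace_mul_cycle, ← Matrix.mul_assoc, hQσ, hFbarpres]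
    simp only [Matrix.mul_assoc]
  -- Part 2
  have hPP : ((1 : Matrix (Fin m) (Fin m) ℂ) - R) * ((1 : Matrix (Fin m) (Fin m) ℂ) - R)
      = (1 : Matrix (Fin m) (Fin m) ℂ) - R := by
    have h2 : ((1 : Matrix (Fin m) (Fin m) ℂ) - R) * (1 - R) = 1 - R - R + R * R := by
      noncomm_ring
    rw [h2, hRR]
    abel
  have hPh : ((1 : Matrix (Fin m) (Fin m) ℂ) - R)ᴴ = (1 : Matrix (Fin m) (Fin m) ℂ) - R := by
    rw [conjTranspose_sub, conjTranspose_one, hRh]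
  have hPpsd : ((1 : Matrix (Fin m) (Fin m) ℂ) - R).PosSemidef := by
    have h1 : ((1 : Matrix (Fin m) (Fin m) ℂ) - R)ᴴ * ((1 : Matrix (Fin m) (Fin m) ℂ) - R)
        = (1 : Matrix (Fin m) (Fin m) ℂ) - R := by rw [hPh, hPP]
    exact h1 ▸ posSemidef_conjTranspose_mul_self _
  have hX : (Fbar ((1 : Matrix (Fin m) (Fin m) ℂ) - R)).PosSemidef := isCP_pos hFbarcp hPpsd
  have htr : (σ * Fbar ((1 : Matrix (Fin m) (Fin m) ℂ) - R)).trace = 0 := by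
    rw [hFbarpres, Matrix.mul_sub, Matrix.mul_one, hρR, sub_self, trace_zero]
  have hXQ : Fbar ((1 : Matrix (Fin m) (Fin m) ℂ) - R) * Q = 0 := key_zero hσ hX hQ htr
  have hFRQ : Fbar R * Q = Q := by
    rw [map_sub, hFbaru, Matrix.sub_mul, Matrix.one_mul, sub_eq_zero] at hXQ
    exact hXQ.symm
  have part2 : Q * Fbar R * Q = Q := by
    rw [Matrix.mul_assoc, hFRQ, hQQ]
  -- Part 3
  have hPz : Q * Fbar ((1 : Matrix (Fin m) (Fin m) ℂ) - R) * Q = 0 := by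
    rw [map_sub, hFbaru]
    have e : Q * ((1 : Matrix (Fin n) (Fin n) ℂ) - Fbar R) * Q
        = Q * Q - Q * Fbar R * Q := by noncomm_ring
    rw [e, hQQ, part2, sub_self]
  refine ⟨part1, part2, ?_⟩
  intro B
  set X := F (Q * B * Q) with hXdef
  have hbase : Q * Fbar X * Q = Q * B * Q := by
    have hd := hFbardis (Q * B * Q)
    rw [Matrix.sub_mul, sub_eq_zero] at hd
    have hd2 : Fbar X * Q = Q * B * Q := by
      rw [hd, Matrix.mul_assoc, hQQ]
    rw [Matrix.mul_assoc, hd2, ← Matrix.mul_assoc, ← Matrix.mul_assoc, hQQ]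
  have hc1 := (corner_zero (⇑Fbar) hFbarcp hPh hPP hQh hPz (X * R)).1
  have hc2 := (corner_zero (⇑Fbar) hFbarcp hPh hPP hQh hPz Xᴴ).2
  rw [conjTranspose_conjTranspose] at hc2
  have hdecomp : R * X * R
      = X - X * ((1 : Matrix (Fin m) (Fin m) ℂ) - R)
        - ((1 : Matrix (Fin m) (Fin m) ℂ) - R) * (X * R) := by
    noncomm_ring
  rw [hdecomp, map_sub, map_sub]
  have expand : Q * (Fbar X - Fbar (X * ((1 : Matrix (Fin m) (Fin m) ℂ) - R))
        - Fbar (((1 : Matrix (Fin m) (Fin m) ℂ) - R) * (X * R))) * Q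
      = Q * Fbar X * Q - Q * Fbar (X * ((1 : Matrix (Fin m) (Fin m) ℂ) - R)) * Q
        - Q * Fbar (((1 : Matrix (Fin m) (Fin m) ℂ) - R) * (X * R)) * Q := by
    noncomm_ring
  rw [expand, hbase, hc1, hc2, sub_zero, sub_zero]
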